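/- Let P be a 2n×2n real symmetric positive definite matrix whose top-right n×n block P₁₂ is invertible. Then the 2n×2n block matrix [(P⁻¹)₁₁, I; I, P₁₁] is positive definite, where (P⁻¹)₁₁ is the top-left n×n block of P⁻¹ and P₁₁ is the top-left n×n block of P. -/

import Mathlib

open Matrix

/-- **Lemma D.1, part 2**: if `P ≻ 0` is a `2n×2n` symmetric positive definite
matrix whose top-right `n×n` block `P₁₂` is invertible, then
`[(P⁻¹)₁₁, I; I, P₁₁] ≻ 0`. -/
theorem blocks_of_posDef_posDef {n : ℕ}
    {P : Matrix (Fin n ⊕ Fin n) (Fin n ⊕ Fin n) ℝ}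
    (hP : P.PosDef) (hP12 : IsUnit P.toBlocks₁₂) :
    (Matrix.fromBlocks (P⁻¹).toBlocks₁₁ (1 : Matrix (Fin n) (Fin n) ℝ)
      (1 : Matrix (Fin n) (Fin n) ℝ) P.toBlocks₁₁).PosDef := by
  have hPinv : (P⁻¹).PosDef := hP.inv
  have hPu : IsUnit P := hP.isUnit
  have hPsymm : Pᵀ = P := hP.isHermitian
  have hPinvsymm : (P⁻¹)ᵀ = P⁻¹ := hPinv.isHermitian
  have hb : ∀ (M : Matrix (Fin n ⊕ Fin n) (Fin n ⊕ Fin n) ℝ), M.IsHermitian →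
      M.toBlocks₁₁.IsHermitian := by
    intro M hM
    ext i j
    simpa [toBlocks₁₁, conjTranspose_apply] using hM.apply (Sum.inl i) (Sum.inl j)
  rw [posDef_iff_dotProduct_mulVec]
  constructor
  · exact Matrix.IsHermitian.fromBlocks (hb _ hPinv.isHermitian) (by simp)
      (hb _ hP.isHermitian)
  · intro z hz
    set x : Fin n → ℝ := z ∘ Sum.inl with hx
    set y : Fin n → ℝ := z ∘ Sum.inr with hy
    have hzxy : z = Sum.elim x y := by ext (i | i) <;> rfl
    set u : Fin n ⊕ Fin n → ℝ := Sum.elim x 0 with hu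
    set v : Fin n ⊕ Fin n → ℝ := Sum.elim y 0 with hv
    set w : Fin n ⊕ Fin n → ℝ := u + P *ᵥ v with hw
    -- key identity
    have hPPinv : P * P⁻¹ = 1 := mul_nonsing_inv P (P.isUnit_iff_isUnit_det.mp hPu)
    have hPinvP : P⁻¹ * P = 1 := nonsing_inv_mul P (P.isUnit_iff_isUnit_det.mp hPu)
    have key : star z ⬝ᵥ ((Matrix.fromBlocks (P⁻¹).toBlocks₁₁ 1 1 P.toBlocks₁₁) *ᵥ z)
        = star w ⬝ᵥ (P⁻¹ *ᵥ w) := by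
      have h1 : P⁻¹ *ᵥ w = P⁻¹ *ᵥ u + v := by
        rw [hw, mulVec_add, mulVec_mulVec, hPinvP, one_mulVec]
      rw [h1, hw]
      simp only [star_trivial, add_dotProduct, dotProduct_add]
      have h2 : (P *ᵥ v) ⬝ᵥ (P⁻¹ *ᵥ u) = v ⬝ᵥ u := by
        have hvm : P *ᵥ v = v ᵥ* P := by
          nth_rewrite 1 [← hPsymm]
          rw [mulVec_transpose]
        rw [hvm, ← dotProduct_mulVec, mulVec_mulVec, hPPinv, one_mulVec]
      have h3 : (P *ᵥ v) ⬝ᵥ v = v ⬝ᵥ (P *ᵥ v) := dotProduct_comm _ _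
      rw [h2, h3]
      have h4 : u ⬝ᵥ (P⁻¹ *ᵥ u) = x ⬝ᵥ ((P⁻¹).toBlocks₁₁ *ᵥ x) := by
        conv_lhs => rw [← fromBlocks_toBlocks P⁻¹]
        rw [hu, fromBlocks_mulVec]
        simp [sumElim_dotProduct_sumElim]
      have h5 : v ⬝ᵥ (P *ᵥ v) = y ⬝ᵥ (P.toBlocks₁₁ *ᵥ y) := by
        conv_lhs => rw [← fromBlocks_toBlocks P]
        rw [hv, fromBlocks_mulVec]
        simp [sumElim_dotProduct_sumElim]
      have h6 : u ⬝ᵥ v = x ⬝ᵥ y := by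
        rw [hu, hv, sumElim_dotProduct_sumElim]; simp
      have h7 : v ⬝ᵥ u = y ⬝ᵥ x := by
        rw [hu, hv, sumElim_dotProduct_sumElim]; simp
      rw [h4, h5, h6, h7, hzxy, fromBlocks_mulVec, sumElim_dotProduct_sumElim]
      simp only [one_mulVec, dotProduct_add, Sum.elim_comp_inl, Sum.elim_comp_inr]
      ring
    rw [key]
    refine hPinv.dotProduct_mulVec_pos (x := w) ?_
    -- suppose w = 0
    intro hw0
    have hPv : P *ᵥ v = Sum.elim (P.toBlocks₁₁ *ᵥ y) (P.toBlocks₂₁ *ᵥ y) := by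
      conv_lhs => rw [← fromBlocks_toBlocks P]
      rw [hv, fromBlocks_mulVec]
      simp
    have hy0 : y = 0 := by
      have h21 : P.toBlocks₂₁ = P.toBlocks₁₂ᵀ := by
        ext i j
        exact (congrFun (congrFun hPsymm (Sum.inr i)) (Sum.inl j)).symm
      have hunit : IsUnit P.toBlocks₂₁ := by
        rw [h21, isUnit_transpose]
        exact hP12
      have hinj := mulVec_injective_iff_isUnit.mpr hunit
      apply hinj
      have hz21 : P.toBlocks₂₁ *ᵥ y = 0 := by
        funext i
        have h := congrFun hw0 (Sum.inr i)
        simpa [hw, hu, hPv] using h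
      rw [hz21, mulVec_zero]
    have hv0 : v = 0 := by rw [hv, hy0]; ext (i | i) <;> simp
    have hx0 : x = 0 := by
      funext i
      have h := congrFun hw0 (Sum.inl i)
      simpa [hw, hu, hv0] using h
    apply hz
    rw [hzxy, hx0, hy0]
    ext (i | i) <;> simp
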